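/- Two n×n partial permutation matrices are equal if and only if their rank-control matrices are equal. -/

import Mathlib

open Matrix

/-- The upper-left `k × l` corner of a matrix (truncated at the matrix size). -/
def cornerSub {F : Type*} {n m : ℕ} (X : Matrix (Fin n) (Fin m) F) (k l : ℕ) :
    Matrix (Fin (min k n)) (Fin (min l m)) F :=
  X.submatrix (Fin.castLE (min_le_right k n)) (Fin.castLE (min_le_right l m))

/-- The `(k, l)` entry of the rank-control matrix: the rank of the upper-left
`k × l` submatrix. -/
noncomputable def rcEntry {F : Type*} [Field F] {n m : ℕ}
    (X : Matrix (Fin n) (Fin m) F) (k l : ℕ) : ℕ :=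
  (cornerSub X k l).rank

/-- A partial permutation matrix: a 0-1 matrix with at most one 1 in each row
and each column. -/
def IsPartialPermMatrix {F : Type*} [Field F] {n : ℕ}
    (X : Matrix (Fin n) (Fin n) F) : Prop :=
  (∀ i j, X i j = 0 ∨ X i j = 1) ∧
    (∀ i, {j | X i j = 1}.Subsingleton) ∧
    (∀ j, {i | X i j = 1}.Subsingleton)

lemma single_one_inj {a : ℕ} : Function.Injective (fun i : Fin a => (Pi.single i (1:ℚ))) := by
  intro i i' h
  by_contra hne
  have h1 : (Pi.single i (1:ℚ) : Fin a → ℚ) i = (Pi.single i' (1:ℚ) : Fin a → ℚ) i := congrFun h i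
  rw [Pi.single_eq_same, Pi.single_eq_of_ne hne] at h1
  exact one_ne_zero h1

lemma rank_eq_sum {a b : ℕ} (X : Matrix (Fin a) (Fin b) ℚ)
    (h01 : ∀ i j, X i j = 0 ∨ X i j = 1)
    (hr : ∀ i, {j | X i j = 1}.Subsingleton)
    (hc : ∀ j, {i | X i j = 1}.Subsingleton) :
    (X.rank : ℚ) = ∑ i, ∑ j, X i j := by
  classical
  set T : Finset (Fin a) := Finset.univ.filter (fun i => ∃ j, X i j = 1) with hT
  have hcol : ∀ j : Fin b, Xᵀ j = 0 ∨ ∃ i ∈ T, Xᵀ j = Pi.single i 1 := by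
    intro j
    by_cases hex : ∃ i, X i j = 1
    · obtain ⟨i₀, hi₀⟩ := hex
      right
      refine ⟨i₀, by simp [hT]; exact ⟨j, hi₀⟩, ?_⟩
      funext i
      by_cases hii : i = i₀
      · subst hii; simp [Matrix.transpose_apply, hi₀, Pi.single_eq_same]
      · have : X i j ≠ 1 := fun h => hii (hc j h hi₀)
        have h0 : X i j = 0 := (h01 i j).resolve_right this
        simp [Matrix.transpose_apply, h0, Pi.single_eq_of_ne hii]
    · left
      funext i
      have : X i j ≠ 1 := fun h => hex ⟨i, h⟩
      have h0 : X i j = 0 := (h01 i j).resolve_right this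
      simp [Matrix.transpose_apply, h0]
  set s : Finset (Fin a → ℚ) := T.image (fun i => Pi.single i 1) with hs
  have hspan : Submodule.span ℚ (Set.range Xᵀ) = Submodule.span ℚ (s : Set (Fin a → ℚ)) := by
    apply le_antisymm
    · rw [Submodule.span_le]
      rintro v ⟨j, rfl⟩
      rcases hcol j with h0 | ⟨i, hiT, hv⟩
      · rw [h0]; exact Submodule.zero_mem _
      · rw [hv]
        apply Submodule.subset_span
        simp only [hs, Finset.coe_image, Set.mem_image, Finset.mem_coe]
        exact ⟨i, hiT, rfl⟩
    · rw [Submodule.span_le]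
      intro v hv
      simp only [hs, Finset.coe_image, Set.mem_image, Finset.mem_coe] at hv
      obtain ⟨i, hiT, rfl⟩ := hv
      rw [hT] at hiT
      simp only [Finset.mem_filter, Finset.mem_univ, true_and] at hiT
      obtain ⟨j, hj⟩ := hiT
      apply Submodule.subset_span
      refine ⟨j, ?_⟩
      funext i'
      by_cases hii : i' = i
      · subst hii; simp [Matrix.transpose_apply, hj, Pi.single_eq_same]
      · have : X i' j ≠ 1 := fun h => hii (hc j h hj)
        have h0 : X i' j = 0 := (h01 i' j).resolve_right this
        simp [Matrix.transpose_apply, h0, Pi.single_eq_of_ne hii]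
  have hrank : X.rank = T.card := by
    rw [Matrix.rank_eq_finrank_span_cols, show X.col = Xᵀ from rfl, hspan]
    rw [finrank_span_finset_eq_card]
    · rw [hs, Finset.card_image_of_injective _ single_one_inj]
    · refine LinearIndepOn.mono ((linearIndepOn_id_range_iff (Pi.basisFun ℚ (Fin a)).linearIndependent.injective).mpr (Pi.basisFun ℚ (Fin a)).linearIndependent) ?_
      intro v hv
      have hv' : v ∈ s := hv
      rw [hs] at hv'
      obtain ⟨i, -, hvi⟩ := Finset.mem_image.mp hv' 
      exact ⟨i, by rw [Pi.basisFun_apply, hvi]⟩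
  have hsum : ∀ i : Fin a, (∑ j, X i j) = if i ∈ T then (1:ℚ) else 0 := by
    intro i
    by_cases hiT : i ∈ T
    · rw [if_pos hiT]
      rw [hT] at hiT
      simp only [Finset.mem_filter, Finset.mem_univ, true_and] at hiT
      obtain ⟨j₀, hj₀⟩ := hiT
      rw [Finset.sum_eq_single j₀]
      · exact hj₀
      · intro j _ hjj
        have : X i j ≠ 1 := fun h => hjj (hr i h hj₀)
        exact (h01 i j).resolve_right this
      · intro h; exact absurd (Finset.mem_univ j₀) h
    · rw [if_neg hiT]
      rw [hT] at hiT
      simp only [Finset.mem_filter, Finset.mem_univ, true_and] at hiT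
      apply Finset.sum_eq_zero
      intro j _
      exact (h01 i j).resolve_right (fun h => hiT ⟨j, h⟩)
  calc (X.rank : ℚ) = T.card := by rw [hrank]
    _ = ∑ i : Fin a, if i ∈ T then (1:ℚ) else 0 := by
        rw [Finset.sum_ite_mem, Finset.univ_inter, Finset.sum_const, nsmul_eq_mul, mul_one]
    _ = ∑ i, ∑ j, X i j := by
        exact (Finset.sum_congr rfl fun i _ => (hsum i)).symm

lemma sum_corner_helper {n k : ℕ} (f : Fin n → ℚ) :
    ∑ i : Fin (min k n), f (Fin.castLE (min_le_right k n) i)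
      = ∑ i : Fin n, if (i : ℕ) < k then f i else 0 := by
  classical
  rw [Finset.sum_ite, Finset.sum_const_zero, add_zero]
  refine Finset.sum_bij' (fun i _ => Fin.castLE (min_le_right k n) i)
    (fun i hi => (⟨i.val, by
      simp only [Finset.mem_filter, Finset.mem_univ, true_and] at hi
      omega⟩ : Fin (min k n))) ?_ ?_ ?_ ?_ ?_
  · intro a _
    simp only [Finset.mem_filter, Finset.mem_univ, true_and, Fin.coe_castLE]
    omega
  · intro a _; exact Finset.mem_univ _
  · intro a _; rfl
  · intro a _; rfl
  · intro a _; rfl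


lemma corner_sum {n m : ℕ} (X : Matrix (Fin n) (Fin m) ℚ) (k l : ℕ) :
    (∑ i, ∑ j, cornerSub X k l i j)
      = ∑ i : Fin n, ∑ j : Fin m, if (i : ℕ) < k ∧ (j : ℕ) < l then X i j else 0 := by
  have h1 : ∀ i : Fin n, (∑ j : Fin m, if (i:ℕ) < k ∧ (j:ℕ) < l then X i j else 0)
      = if (i:ℕ) < k then (∑ j : Fin m, if (j:ℕ) < l then X i j else 0) else 0 := by
    intro i
    by_cases hi : (i:ℕ) < k
    · simp [hi]
    · simp [hi]
  rw [Finset.sum_congr rfl (fun i _ => h1 i),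
    ← sum_corner_helper (f := fun i => ∑ j : Fin m, if (j:ℕ) < l then X i j else 0)]
  apply Finset.sum_congr rfl
  intro i _
  rw [← sum_corner_helper (f := fun j => X (Fin.castLE (min_le_right k n) i) j)]
  rfl

lemma sum_eq_single_entry {n : ℕ} (X : Matrix (Fin n) (Fin n) ℚ) (i j : Fin n) :
    (∑ a : Fin n, ∑ b : Fin n, if (a:ℕ) = (i:ℕ) ∧ (b:ℕ) = (j:ℕ) then X a b else 0) = X i j := by
  have h : ∀ a b : Fin n, ((a:ℕ) = (i:ℕ) ∧ (b:ℕ) = (j:ℕ)) ↔ (a = i ∧ b = j) := by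
    intro a b; simp [Fin.ext_iff]
  simp only [h, ite_and]
  simp [Finset.sum_ite_eq']

lemma incl_excl {n : ℕ} (X : Matrix (Fin n) (Fin n) ℚ) (i j : Fin n) :
    (∑ a : Fin n, ∑ b : Fin n, if (a:ℕ) < (i:ℕ)+1 ∧ (b:ℕ) < (j:ℕ)+1 then X a b else 0)
    + (∑ a : Fin n, ∑ b : Fin n, if (a:ℕ) < (i:ℕ) ∧ (b:ℕ) < (j:ℕ) then X a b else 0)
    = (∑ a : Fin n, ∑ b : Fin n, if (a:ℕ) < (i:ℕ) ∧ (b:ℕ) < (j:ℕ)+1 then X a b else 0)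
    + (∑ a : Fin n, ∑ b : Fin n, if (a:ℕ) < (i:ℕ)+1 ∧ (b:ℕ) < (j:ℕ) then X a b else 0)
    + X i j := by
  rw [← sum_eq_single_entry X i j, ← Finset.sum_add_distrib, ← Finset.sum_add_distrib,
    ← Finset.sum_add_distrib]
  apply Finset.sum_congr rfl
  intro a _
  rw [← Finset.sum_add_distrib, ← Finset.sum_add_distrib, ← Finset.sum_add_distrib]
  apply Finset.sum_congr rfl
  intro b _
  split_ifs <;> first | ring1 | omega

lemma rc_cast {n : ℕ} (X : Matrix (Fin n) (Fin n) ℚ) (hX : IsPartialPermMatrix X) (k l : ℕ) :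
    (rcEntry X k l : ℚ)
      = ∑ a : Fin n, ∑ b : Fin n, if (a:ℕ) < k ∧ (b:ℕ) < l then X a b else 0 := by
  obtain ⟨h01, hr, hc⟩ := hX
  rw [rcEntry, ← corner_sum]
  apply rank_eq_sum
  · intro i j; exact h01 _ _
  · intro i x hx y hy
    have := hr (Fin.castLE (min_le_right k n) i) hx hy
    exact Fin.castLE_injective _ this
  · intro j x hx y hy
    have := hc (Fin.castLE (min_le_right l n) j) hx hy
    exact Fin.castLE_injective _ this

theorem stmt4 {n : ℕ} (π σ : Matrix (Fin n) (Fin n) ℚ)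
    (hπ : IsPartialPermMatrix π) (hσ : IsPartialPermMatrix σ) :
    π = σ ↔ ∀ k l : ℕ, rcEntry π k l = rcEntry σ k l := by
  constructor
  · rintro rfl k l; rfl
  · intro h
    have hS : ∀ k l : ℕ,
        (∑ a : Fin n, ∑ b : Fin n, if (a:ℕ) < k ∧ (b:ℕ) < l then π a b else 0)
        = ∑ a : Fin n, ∑ b : Fin n, if (a:ℕ) < k ∧ (b:ℕ) < l then σ a b else 0 := by
      intro k l
      rw [← rc_cast π hπ, ← rc_cast σ hσ, h k l]
    ext a b
    have e1 := incl_excl π a b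
    have e2 := incl_excl σ a b
    have s1 := hS ((a:ℕ)+1) ((b:ℕ)+1)
    have s2 := hS (a:ℕ) (b:ℕ)
    have s3 := hS (a:ℕ) ((b:ℕ)+1)
    have s4 := hS ((a:ℕ)+1) (b:ℕ)
    linarith
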